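/- If b₀ + b₁ ≥ 1, A₀ ≠ A₁ and A₀, A₁ ≥ 1, then the ghost measure μ of f (the weak limit of the μ_N) is continuous: μ({x}) = 0 for every x ∈ ℝ. -/

import Mathlib

open MeasureTheory Filter Topology

/-- The `N`-th approximant to the ghost measure of `f`: the normalised Dirac comb built from
the values of `f` on the fundamental region `[2^N, 2^(N+1))`. -/
noncomputable def ghostApprox (f : ℕ → ℕ) (N : ℕ) : Measure ℝ :=
  (∑ n ∈ Finset.range (2 ^ N), (f (2 ^ N + n) : ENNReal))⁻¹ •
    ∑ n ∈ Finset.range (2 ^ N), (f (2 ^ N + n) : ENNReal) • Measure.dirac ((n : ℝ) / 2 ^ N)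

/-- Weak (vague) convergence of a sequence of finite measures on `ℝ`. -/
def WeakLimit (μs : ℕ → Measure ℝ) (μ : Measure ℝ) : Prop :=
  ∀ g : BoundedContinuousFunction ℝ ℝ,
    Tendsto (fun N => ∫ x, g x ∂(μs N)) atTop (𝓝 (∫ x, g x ∂μ))

def Cseq (Q B : ℕ) : ℕ → ℕ
  | 0 => 0
  | (M+1) => Q * Cseq Q B M + 2^M * B
lemma Cadd (Q B a : ℕ) : ∀ b, Cseq Q B (a+b) = Q^b * Cseq Q B a + 2^a * Cseq Q B b
  | 0 => by simp [Cseq]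
  | (b+1) => by
    have h : a + (b+1) = (a+b) + 1 := rfl
    rw [h, Cseq, Cadd Q B a b, Cseq]
    ring

lemma sum_range_two_mul {β} [AddCommMonoid β] (n : ℕ) (g : ℕ → β) :
    ∑ t ∈ Finset.range (2*n), g t = ∑ u ∈ Finset.range n, (g (2*u) + g (2*u+1)) := by
  induction n with
  | zero => simp
  | succ n ih =>
    have h : 2 * (n+1) = (2*n + 1) + 1 := by ring
    rw [h, Finset.sum_range_succ, Finset.sum_range_succ, ih, Finset.sum_range_succ, add_assoc]

section
variable (A₀ A₁ b₀ b₁ : ℕ) (f : ℕ → ℕ)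
variable (heven : ∀ n, 1 ≤ n → f (2 * n) = A₀ * f n + b₀)
variable (hodd : ∀ n, 1 ≤ n → f (2 * n + 1) = A₁ * f n + b₁)

include heven hodd in
lemma Sform (s : ℕ) (hs : 1 ≤ s) :
    ∀ M, ∑ t ∈ Finset.range (2^M), f (s * 2^M + t)
      = (A₀+A₁)^M * f s + Cseq (A₀+A₁) (b₀+b₁) M
  | 0 => by simp [Cseq]
  | (M+1) => by
    have h2 : (2:ℕ)^(M+1) = 2 * 2^M := by ring
    have hkey : ∀ u, u < 2^M →
        f (s * (2 * 2^M) + 2*u) + f (s * (2 * 2^M) + (2*u+1))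
          = (A₀ + A₁) * f (s * 2^M + u) + (b₀ + b₁) := by
      intro u hu
      have h1 : 1 ≤ s * 2^M + u := le_add_right (Nat.one_le_iff_ne_zero.mpr
        (by positivity))
      have e1 : s * (2 * 2^M) + 2*u = 2 * (s * 2^M + u) := by ring
      have e2 : s * (2 * 2^M) + (2*u+1) = 2 * (s * 2^M + u) + 1 := by ring
      rw [e1, e2, heven _ h1, hodd _ h1]
      ring
    rw [h2, sum_range_two_mul]
    rw [Finset.sum_congr rfl (fun u hu => hkey u (Finset.mem_range.mp hu))]
    rw [Finset.sum_add_distrib, Finset.sum_const, ← Finset.mul_sum,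
      Sform s hs M, Finset.card_range, Cseq]
    ring


include heven hodd in
lemma f_pos (hf1 : 1 ≤ f 1) (hA0 : 1 ≤ A₀) (hA1 : 1 ≤ A₁) :
    ∀ m, 1 ≤ m → 1 ≤ f m := by
  intro m
  induction m using Nat.strong_induction_on with
  | _ m ih =>
    intro hm
    rcases Nat.lt_or_ge m 2 with h2 | h2
    · interval_cases m
      · exact hf1
    · have hq : 1 ≤ m / 2 := Nat.one_le_div_iff (by norm_num) |>.mpr h2
      have hlt : m / 2 < m := Nat.div_lt_self (by omega) (by norm_num)
      have hfq := ih (m/2) hlt hq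
      rcases Nat.mod_two_eq_zero_or_one m with hpar | hpar
      · have : m = 2 * (m/2) := by omega
        rw [this, heven _ hq]
        calc 1 ≤ A₀ * f (m/2) := Nat.one_le_iff_ne_zero.mpr (by positivity)
        _ ≤ _ := Nat.le_add_right _ _
      · have : m = 2 * (m/2) + 1 := by omega
        rw [this, hodd _ hq]
        calc 1 ≤ A₁ * f (m/2) := Nat.one_le_iff_ne_zero.mpr (by positivity)
        _ ≤ _ := Nat.le_add_right _ _

lemma geomSumLe {A : ℕ} (hA : 2 ≤ A) : ∀ k, ∑ i ∈ Finset.range k, A^i ≤ A^k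
  | 0 => by simp
  | (k+1) => by
    rw [Finset.sum_range_succ, pow_succ]
    have := geomSumLe hA k
    nlinarith [pow_pos (by omega : 0 < A) k]

include heven hodd in
lemma f_le (hA : 2 ≤ max A₀ A₁) :
    ∀ k j, j < 2^k → f (2^k + j) ≤ (f 1 + max b₀ b₁) * (max A₀ A₁)^k := by
  set A := max A₀ A₁
  set b := max b₀ b₁
  have main : ∀ k j, j < 2^k → f (2^k + j) ≤ f 1 * A^k + b * ∑ i ∈ Finset.range k, A^i := by
    intro k
    induction k with
    | zero => intro j hj; interval_cases j; simp
    | succ k ih =>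
      intro j hj
      have hj2 : j / 2 < 2^k := by
        apply Nat.div_lt_of_lt_mul
        calc j < 2^(k+1) := hj
        _ = 2 * 2^k := by ring
      have hb := ih (j/2) hj2
      have h1 : 1 ≤ 2^k + j/2 := by
        have := Nat.one_le_two_pow (n := k); omega
      have hgs : ∑ i ∈ Finset.range (k+1), A^i = A * ∑ i ∈ Finset.range k, A^i + 1 := by
        rw [Finset.sum_range_succ']
        rw [Finset.mul_sum]
        simp [pow_succ, mul_comm]
      rcases Nat.mod_two_eq_zero_or_one j with hpar | hpar
      · have he : 2^(k+1) + j = 2 * (2^k + j/2) := by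
          have h2 : (2:ℕ)^(k+1) = 2*2^k := by ring
          omega
        rw [he, heven _ h1]
        have hA0 : A₀ ≤ A := le_max_left _ _
        have hb0 : b₀ ≤ b := le_max_left _ _
        calc A₀ * f (2^k + j/2) + b₀ ≤ A * (f 1 * A^k + b * ∑ i ∈ Finset.range k, A^i) + b :=
              add_le_add (Nat.mul_le_mul hA0 hb) hb0
        _ = f 1 * A^(k+1) + b * (A * ∑ i ∈ Finset.range k, A^i + 1) := by ring
        _ = _ := by rw [← hgs]
      · have he : 2^(k+1) + j = 2 * (2^k + j/2) + 1 := by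
          have h2 : (2:ℕ)^(k+1) = 2*2^k := by ring
          omega
        rw [he, hodd _ h1]
        have hA0 : A₁ ≤ A := le_max_right _ _
        have hb0 : b₁ ≤ b := le_max_right _ _
        calc A₁ * f (2^k + j/2) + b₁ ≤ A * (f 1 * A^k + b * ∑ i ∈ Finset.range k, A^i) + b :=
              add_le_add (Nat.mul_le_mul hA0 hb) hb0
        _ = f 1 * A^(k+1) + b * (A * ∑ i ∈ Finset.range k, A^i + 1) := by ring
        _ = _ := by rw [← hgs]
  intro k j hj
  calc f (2^k + j) ≤ f 1 * A^k + b * ∑ i ∈ Finset.range k, A^i := main k j hj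
  _ ≤ f 1 * A^k + b * A^k := by
      have := geomSumLe hA k
      exact Nat.add_le_add_left (Nat.mul_le_mul_left _ this) _
  _ = (f 1 + b) * A^k := by ring

include heven hodd in
lemma sum_bound (hA : 2 ≤ max A₀ A₁) (k M : ℕ) (x : ℝ) (s : Finset ℕ)
    (hs : ∀ n ∈ s, n < 2^(k+M))
    (hx : ∀ n ∈ s, |(n:ℝ)/2^(k+M) - x| ≤ ((2:ℝ)^k)⁻¹) :
    ∑ n ∈ s, f (2^(k+M) + n)
      ≤ 3 * ((A₀+A₁)^M * ((f 1 + max b₀ b₁) * (max A₀ A₁)^k) + Cseq (A₀+A₁) (b₀+b₁) M) := by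
  set N := k + M with hN
  set J := s.image (· / 2^M) with hJ
  have hTpos : 0 < 2^M := Nat.pow_pos (by norm_num)
  have h2N : (2:ℕ)^N = 2^k * 2^M := pow_add 2 k M
  have hjlt : ∀ j ∈ J, j < 2^k := by
    intro j hj
    obtain ⟨n, hn, rfl⟩ := Finset.mem_image.mp hj
    have h := hs n hn
    rw [h2N, mul_comm] at h
    exact Nat.div_lt_of_lt_mul h
  have hWj : ∀ j ∈ J, ∑ t ∈ Finset.range (2^M), f ((2^k + j) * 2^M + t)
      ≤ (A₀+A₁)^M * ((f 1 + max b₀ b₁) * (max A₀ A₁)^k) + Cseq (A₀+A₁) (b₀+b₁) M := by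
    intro j hj
    rw [Sform A₀ A₁ b₀ b₁ f heven hodd (2^k + j) (le_trans Nat.one_le_two_pow (Nat.le_add_right _ _)) M]
    exact Nat.add_le_add_right
      (Nat.mul_le_mul_left _ (f_le A₀ A₁ b₀ b₁ f heven hodd hA k j (hjlt j hj))) _
  have hsplit : ∑ n ∈ s, f (2^N + n)
      ≤ ∑ j ∈ J, ∑ t ∈ Finset.range (2^M), f ((2^k + j) * 2^M + t) := by
    rw [← Finset.sum_fiberwise_of_maps_to (g := (· / 2^M))
      (fun n hn => Finset.mem_image_of_mem _ hn) (fun n => f (2^N + n))]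
    apply Finset.sum_le_sum
    intro j hj
    calc ∑ n ∈ s.filter (· / 2^M = j), f (2^N + n)
        ≤ ∑ n ∈ Finset.Ico (j*2^M) (j*2^M+2^M), f (2^N + n) := by
          apply Finset.sum_le_sum_of_subset
          intro n hn
          obtain ⟨hns, hdiv⟩ := Finset.mem_filter.mp hn
          have hdiv' : n / 2^M = j := hdiv
          have h1 := Nat.div_add_mod n (2^M)
          rw [mul_comm] at h1
          have h2 := Nat.mod_lt n hTpos
          rw [Finset.mem_Ico, ← hdiv']
          omega
      _ = ∑ t ∈ Finset.range (2^M), f (2^N + (j*2^M + t)) := by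
          rw [Finset.sum_Ico_eq_sum_range]; simp
      _ = ∑ t ∈ Finset.range (2^M), f ((2^k + j)*2^M + t) := by
          apply Finset.sum_congr rfl
          intro t _
          congr 1
          rw [hN, h2N]
          ring
  have hcard : J.card ≤ 3 := by
    obtain ⟨m, hm1, hm2⟩ : ∃ m:ℤ, (m:ℝ) ≤ 2^k*x ∧ (2:ℝ)^k*x < m+1 :=
      ⟨⌊(2:ℝ)^k*x⌋, Int.floor_le _, Int.lt_floor_add_one _⟩
    have hmem : ∀ j ∈ J, (j:ℤ) ∈ Finset.Icc (m-1) (m+1) := by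
      intro j hj
      obtain ⟨n, hn, rfl⟩ := Finset.mem_image.mp hj
      have h1 := abs_le.mp (hx n hn)
      have hTR : (0:ℝ) < (2:ℝ)^M := by positivity
      have hkR : (0:ℝ) < (2:ℝ)^k := by positivity
      have h2NR : ((2:ℝ))^N = 2^k * 2^M := by rw [hN, pow_add]
      have hNR : (0:ℝ) < (2:ℝ)^N := by positivity
      have hinv : ((2:ℝ)^k)⁻¹ * (2:ℝ)^N = 2^M := by
        rw [h2NR, ← mul_assoc, inv_mul_cancel₀ (ne_of_gt hkR), one_mul]
      have hnup : (n:ℝ) ≤ (2^k * x) * 2^M + 2^M := by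
        have h3 : (n:ℝ)/2^N ≤ x + ((2:ℝ)^k)⁻¹ := by linarith [h1.2]
        have h4 := (div_le_iff₀ hNR).mp h3
        nlinarith
      have hnlo : (2^k * x) * 2^M - 2^M ≤ (n:ℝ) := by
        have h3 : x - ((2:ℝ)^k)⁻¹ ≤ (n:ℝ)/2^N := by linarith [h1.1]
        have h4 := (le_div_iff₀ hNR).mp h3
        nlinarith
      have hjT : (n / 2^M) * 2^M ≤ n := Nat.div_mul_le_self n _
      have hjT2 : n < (n / 2^M) * 2^M + 2^M := by
        have ha := Nat.div_add_mod n (2^M)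
        rw [mul_comm] at ha
        have hb := Nat.mod_lt n hTpos
        omega
      have hjR : ((n/2^M : ℕ):ℝ) * 2^M ≤ (n:ℝ) := by
        calc ((n/2^M : ℕ):ℝ) * 2^M = (((n/2^M)*2^M : ℕ) : ℝ) := by push_cast; ring
        _ ≤ (n:ℝ) := Nat.cast_le.mpr hjT
      have hjR2 : (n:ℝ) < ((n/2^M : ℕ):ℝ) * 2^M + 2^M := by
        calc (n:ℝ) < (((n/2^M)*2^M + 2^M : ℕ) : ℝ) := Nat.cast_lt.mpr hjT2
        _ = ((n/2^M : ℕ):ℝ) * 2^M + 2^M := by push_cast; ring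
      have hjup : ((n/2^M : ℕ):ℝ) < (m:ℝ) + 2 := by nlinarith
      have hjlo2 : (m:ℝ) - 1 ≤ ((n/2^M : ℕ):ℝ) + 1 := by nlinarith
      rw [Finset.mem_Icc]
      constructor
      · have h5 : (m:ℝ) < ((n/2^M : ℕ):ℝ) + 2 := by nlinarith
        have h6 : m < ((n/2^M : ℕ):ℤ) + 2 := by rw [← @Int.cast_lt ℝ, Int.cast_add, Int.cast_natCast, Int.cast_two]; exact h5
        omega
      · have h5 : ((n/2^M : ℕ):ℝ) < (m:ℝ) + 2 := by nlinarith
        have h6 : ((n/2^M : ℕ):ℤ) < m + 2 := by rw [← @Int.cast_lt ℝ, Int.cast_add, Int.cast_natCast, Int.cast_two]; exact h5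
        omega
    calc J.card ≤ (Finset.Icc (m-1) (m+1)).card :=
        Finset.card_le_card_of_injOn (fun j => (j:ℤ)) hmem
          (fun a _ b _ h => Nat.cast_injective h)
    _ = 3 := by
        rw [Int.card_Icc]
        have : (m+1+1-(m-1)) = 3 := by ring
        rw [this]
        rfl
  calc ∑ n ∈ s, f (2^N + n)
      ≤ ∑ j ∈ J, ∑ t ∈ Finset.range (2^M), f ((2^k + j) * 2^M + t) := hsplit
    _ ≤ J.card • ((A₀+A₁)^M * ((f 1 + max b₀ b₁) * (max A₀ A₁)^k) + Cseq (A₀+A₁) (b₀+b₁) M) :=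
        Finset.sum_le_card_nsmul J _ _ hWj
    _ ≤ 3 * ((A₀+A₁)^M * ((f 1 + max b₀ b₁) * (max A₀ A₁)^k) + Cseq (A₀+A₁) (b₀+b₁) M) := by
        rw [smul_eq_mul]
        exact Nat.mul_le_mul_right _ hcard
end

lemma integral_ghostApprox (f : ℕ → ℕ) (N : ℕ) (g : BoundedContinuousFunction ℝ ℝ) :
    ∫ x, g x ∂(ghostApprox f N) =
      ((∑ n ∈ Finset.range (2^N), (f (2^N + n) : ℝ))⁻¹) *
        ∑ n ∈ Finset.range (2^N), (f (2^N + n) : ℝ) * g ((n:ℝ)/2^N) := by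
  have hfin : ∀ n : ℕ, IsFiniteMeasure
      ((f (2^N + n) : ENNReal) • Measure.dirac ((n:ℝ)/2^N)) := by
    intro n
    constructor
    rw [Measure.smul_apply, smul_eq_mul]
    exact ENNReal.mul_lt_top (ENNReal.natCast_lt_top _) (by simp)
  rw [ghostApprox, integral_smul_measure,
    integral_finset_sum_measure (fun n _ => by
      have := hfin n
      exact g.integrable _)]
  have hterm : ∀ n, ∫ x, g x ∂((f (2^N + n) : ENNReal) • Measure.dirac ((n:ℝ)/2^N))
      = (f (2^N + n) : ℝ) * g ((n:ℝ)/2^N) := by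
    intro n
    rw [integral_smul_measure, integral_dirac]; simp [smul_eq_mul]
  rw [Finset.sum_congr rfl (fun n _ => hterm n)]
  rw [smul_eq_mul]
  congr 1
  rw [← Nat.cast_sum]
  rw [ENNReal.toReal_inv]
  norm_cast

noncomputable def bump (x c : ℝ) : BoundedContinuousFunction ℝ ℝ :=
  ⟨⟨fun y => max 0 (1 - |c| * |y - x|), by fun_prop⟩, 1, by
    intro a b
    rw [Real.dist_eq]
    have h : ∀ y : ℝ, 0 ≤ max 0 (1 - |c| * |y - x|) ∧ max 0 (1 - |c| * |y - x|) ≤ 1 := by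
      intro y
      refine ⟨le_max_left _ _, max_le ?_ ?_⟩
      · norm_num
      · have : 0 ≤ |c| * |y - x| := by positivity
        linarith
    have ha := h a; have hb := h b
    rw [abs_le]
    constructor <;> simp only [ContinuousMap.coe_mk] <;> linarith [ha.1, ha.2, hb.1, hb.2]⟩

lemma bump_self (x c : ℝ) : bump x c x = 1 := by
  show max 0 (1 - |c| * |x - x|) = 1
  simp

lemma bump_nonneg (x c y : ℝ) : 0 ≤ bump x c y := le_max_left _ _

lemma bump_le_one (x c y : ℝ) : bump x c y ≤ 1 := by
  have : 0 ≤ |c| * |y - x| := by positivity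
  exact max_le (by norm_num) (by linarith)

lemma bump_support {x c y : ℝ} (hc : 0 < c) (h : bump x c y ≠ 0) : |y - x| ≤ c⁻¹ := by
  by_contra hcon
  push_neg at hcon
  apply h
  have habs : |c| = c := abs_of_pos hc
  have : 1 - |c| * |y - x| < 0 := by
    rw [habs]
    have h2 : c * c⁻¹ < c * |y - x| := by
      exact mul_lt_mul_of_pos_left hcon hc
    rw [mul_inv_cancel₀ (ne_of_gt hc)] at h2
    linarith
  show max 0 (1 - |c| * |y - x|) = 0
  exact max_eq_left (le_of_lt this)

theorem stmt_9 (A₀ A₁ b₀ b₁ : ℕ) (hnz : ¬(A₀ = 0 ∧ A₁ = 0 ∧ b₀ = 0 ∧ b₁ = 0))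
    (f : ℕ → ℕ) (hf1 : 1 ≤ f 1)
    (heven : ∀ n, 1 ≤ n → f (2 * n) = A₀ * f n + b₀)
    (hodd : ∀ n, 1 ≤ n → f (2 * n + 1) = A₁ * f n + b₁)
    (hb : 1 ≤ b₀ + b₁) (hAne : A₀ ≠ A₁) (hA0 : 1 ≤ A₀) (hA1 : 1 ≤ A₁)
    (μ : Measure ℝ) (hμ : IsProbabilityMeasure μ)
    (hlim : WeakLimit (ghostApprox f) μ) :
    ∀ x : ℝ, μ {x} = 0 := by
  intro x
  haveI := hμ
  have hA2 : 2 ≤ max A₀ A₁ := by omega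
  have hAmQ : max A₀ A₁ + 1 ≤ A₀ + A₁ := by omega
  have hQpos : 0 < A₀ + A₁ := by omega
  have hQR : (0:ℝ) < ((A₀ + A₁ : ℕ) : ℝ) := by exact_mod_cast hQpos
  have hr1 : ((max A₀ A₁ : ℕ):ℝ) / ((A₀+A₁ : ℕ):ℝ) < 1 := by
    rw [div_lt_one hQR]
    exact_mod_cast (by omega : max A₀ A₁ < A₀ + A₁)
  have hr0 : (0:ℝ) ≤ ((max A₀ A₁ : ℕ):ℝ) / ((A₀+A₁ : ℕ):ℝ) := by positivity
  set K : ℕ → ℝ := fun k =>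
    max (((f 1 : ℝ) + (max b₀ b₁ : ℕ)) * (((max A₀ A₁ : ℕ):ℝ) / ((A₀+A₁ : ℕ):ℝ))^k)
      (((2:ℝ))⁻¹^k) with hK
  have htend : Tendsto (fun k => 3 * K k) atTop (𝓝 0) := by
    have t1 : Tendsto (fun k : ℕ =>
        ((f 1 : ℝ) + (max b₀ b₁ : ℕ)) * (((max A₀ A₁ : ℕ):ℝ) / ((A₀+A₁ : ℕ):ℝ))^k)
        atTop (𝓝 0) := by
      simpa using (tendsto_pow_atTop_nhds_zero_of_lt_one hr0 hr1).const_mul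
        ((f 1 : ℝ) + ((max b₀ b₁ : ℕ):ℝ))
    have t2 : Tendsto (fun k : ℕ => ((2:ℝ))⁻¹^k) atTop (𝓝 0) :=
      tendsto_pow_atTop_nhds_zero_of_lt_one (by norm_num) (by norm_num)
    have h3 := (t1.max t2).const_mul (3:ℝ)
    have h4 : (3:ℝ) * (0 ⊔ 0) = 0 := by norm_num
    rw [h4] at h3
    exact h3
  have key : ∀ ε : ℝ, 0 < ε → (μ {x}).toReal < ε := by
    intro ε hε
    obtain ⟨k, hk⟩ := (htend.eventually (gt_mem_nhds hε)).exists
    set g := bump x ((2:ℝ)^k) with hg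
    have hgsupp : ∀ y : ℝ, g y ≠ 0 → |y - x| ≤ ((2:ℝ)^k)⁻¹ :=
      fun y h => bump_support (by positivity) h
    have hKpos : 0 < K k := lt_of_lt_of_le (by positivity) (le_max_right _ _)
    have hNbound : ∀ M : ℕ, ∫ y, g y ∂(ghostApprox f (k + M)) ≤ 3 * K k := by
      intro M
      set N := k + M with hN
      rw [integral_ghostApprox]
      set s := (Finset.range (2^N)).filter (fun n : ℕ => g ((n:ℝ)/2^N) ≠ 0) with hsdef
      have h0 : ∑ n ∈ Finset.range (2^N), (f (2^N + n) : ℝ) * g ((n:ℝ)/2^N)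
          = ∑ n ∈ s, (f (2^N + n) : ℝ) * g ((n:ℝ)/2^N) := by
        rw [hsdef, Finset.sum_filter_of_ne]
        intro n _ hne hzero
        rw [hzero, mul_zero] at hne
        exact hne rfl
      have h1 : ∑ n ∈ s, (f (2^N+n):ℝ) * g ((n:ℝ)/2^N) ≤ ∑ n ∈ s, ((f (2^N+n) : ℕ) :ℝ) :=
        Finset.sum_le_sum (fun n _ => by
          have hle1 := bump_le_one x ((2:ℝ)^k) ((n:ℝ)/2^N)
          have hge0 := bump_nonneg x ((2:ℝ)^k) ((n:ℝ)/2^N)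
          have hfn : (0:ℝ) ≤ (f (2^N+n) : ℝ) := Nat.cast_nonneg _
          nlinarith)
      have hsb := sum_bound A₀ A₁ b₀ b₁ f heven hodd hA2 k M x s
        (fun n hn => Finset.mem_range.mp (Finset.mem_filter.mp hn).1)
        (fun n hn => hgsupp _ ((Finset.mem_filter.mp hn).2))
      have eN : ∑ n ∈ Finset.range (2^N), f (2^N + n)
          = (A₀+A₁)^M * (∑ t ∈ Finset.range (2^k), f (2^k + t))
            + 2^k * Cseq (A₀+A₁) (b₀+b₁) M := by
        have e1 := Sform A₀ A₁ b₀ b₁ f heven hodd 1 le_rfl N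
        have e2 := Sform A₀ A₁ b₀ b₁ f heven hodd 1 le_rfl k
        simp only [one_mul] at e1 e2
        rw [e1, e2, hN, pow_add, Cadd]
        ring
      have hSkge : (A₀+A₁)^k ≤ ∑ t ∈ Finset.range (2^k), f (2^k + t) := by
        have e2 := Sform A₀ A₁ b₀ b₁ f heven hodd 1 le_rfl k
        simp only [one_mul] at e2
        rw [e2]
        calc (A₀+A₁)^k = (A₀+A₁)^k * 1 := (mul_one _).symm
        _ ≤ (A₀+A₁)^k * f 1 := Nat.mul_le_mul_left _ hf1
        _ ≤ _ := Nat.le_add_right _ _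
      have hDpos : 0 < ∑ n ∈ Finset.range (2^N), f (2^N+n) := by
        apply Finset.sum_pos
        · intro n _
          exact f_pos A₀ A₁ b₀ b₁ f heven hodd hf1 hA0 hA1 _
            (le_trans Nat.one_le_two_pow (Nat.le_add_right _ _))
        · exact ⟨0, Finset.mem_range.mpr (Nat.pow_pos (by norm_num))⟩
      have hDR : (0:ℝ) < ((∑ n ∈ Finset.range (2^N), f (2^N+n) : ℕ) : ℝ) := by
        exact_mod_cast hDpos
      -- the key real inequality: numerator ≤ 3 * K k * denominator
      have hnum : ((3 * ((A₀+A₁)^M * ((f 1 + max b₀ b₁) * (max A₀ A₁)^k)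
            + Cseq (A₀+A₁) (b₀+b₁) M) : ℕ) : ℝ)
          ≤ 3 * K k * ((∑ n ∈ Finset.range (2^N), f (2^N+n) : ℕ) : ℝ) := by
        rw [eN]
        push_cast
        have hKge1 : ((f 1 : ℝ) + (max b₀ b₁ : ℕ)) * (((max A₀ A₁ : ℕ):ℝ) / ((A₀+A₁ : ℕ):ℝ))^k ≤ K k :=
          le_max_left _ _
        have hKge2 : ((2:ℝ))⁻¹^k ≤ K k := le_max_right _ _
        have hQk : (0:ℝ) < ((A₀+A₁ : ℕ):ℝ)^k := by positivity
        have hQM : (0:ℝ) ≤ ((A₀+A₁ : ℕ):ℝ)^M := by positivity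
        have hpow : (((max A₀ A₁ : ℕ):ℝ) / ((A₀+A₁ : ℕ):ℝ))^k * ((A₀+A₁ : ℕ):ℝ)^k
            = ((max A₀ A₁ : ℕ):ℝ)^k := by
          rw [div_pow]
          field_simp
        have hSkR : ((A₀+A₁ : ℕ):ℝ)^k ≤ ((∑ t ∈ Finset.range (2^k), f (2^k + t) : ℕ) : ℝ) := by
          exact_mod_cast hSkge
        have piece1 : ((A₀+A₁:ℕ):ℝ)^M * (((f 1:ℝ) + (max b₀ b₁ : ℕ)) * ((max A₀ A₁:ℕ):ℝ)^k)
            ≤ K k * (((A₀+A₁:ℕ):ℝ)^M * ((∑ t ∈ Finset.range (2^k), f (2^k + t) : ℕ) : ℝ)) := by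
          have hc1 : ((f 1:ℝ) + (max b₀ b₁ : ℕ)) * ((max A₀ A₁:ℕ):ℝ)^k ≤ K k * ((A₀+A₁:ℕ):ℝ)^k := by
            calc ((f 1:ℝ) + (max b₀ b₁ : ℕ)) * ((max A₀ A₁:ℕ):ℝ)^k
                = (((f 1 : ℝ) + (max b₀ b₁ : ℕ)) * (((max A₀ A₁ : ℕ):ℝ) / ((A₀+A₁ : ℕ):ℝ))^k) * ((A₀+A₁ : ℕ):ℝ)^k := by
                  rw [mul_assoc, hpow]
            _ ≤ K k * ((A₀+A₁ : ℕ):ℝ)^k :=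
                  mul_le_mul_of_nonneg_right hKge1 (le_of_lt hQk)
          calc ((A₀+A₁:ℕ):ℝ)^M * (((f 1:ℝ) + (max b₀ b₁ : ℕ)) * ((max A₀ A₁:ℕ):ℝ)^k)
              ≤ ((A₀+A₁:ℕ):ℝ)^M * (K k * ((A₀+A₁:ℕ):ℝ)^k) :=
                mul_le_mul_of_nonneg_left hc1 hQM
          _ ≤ ((A₀+A₁:ℕ):ℝ)^M * (K k * ((∑ t ∈ Finset.range (2^k), f (2^k + t) : ℕ) : ℝ)) := by
                apply mul_le_mul_of_nonneg_left _ hQM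
                exact mul_le_mul_of_nonneg_left hSkR (le_of_lt hKpos)
          _ = K k * (((A₀+A₁:ℕ):ℝ)^M * ((∑ t ∈ Finset.range (2^k), f (2^k + t) : ℕ) : ℝ)) := by ring
        have piece2 : ((Cseq (A₀+A₁) (b₀+b₁) M : ℕ):ℝ)
            ≤ K k * ((2:ℝ)^k * ((Cseq (A₀+A₁) (b₀+b₁) M : ℕ):ℝ)) := by
          have h2k : ((2:ℝ))⁻¹^k * (2:ℝ)^k = 1 := by
            rw [← mul_pow]
            norm_num
          have hC0 : (0:ℝ) ≤ ((Cseq (A₀+A₁) (b₀+b₁) M : ℕ):ℝ) := Nat.cast_nonneg _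
          nlinarith [mul_le_mul_of_nonneg_right hKge2 (le_of_lt (by positivity : (0:ℝ) < (2:ℝ)^k))]
        push_cast at piece1 piece2
        linarith
      -- assemble
      have hnum2 : ∑ n ∈ Finset.range (2^N), (f (2^N + n) : ℝ) * g ((n:ℝ)/2^N)
          ≤ 3 * K k * ((∑ n ∈ Finset.range (2^N), f (2^N+n) : ℕ) : ℝ) := by
        rw [h0]
        refine le_trans h1 (le_trans ?_ hnum)
        exact_mod_cast hsb
      have hcastsum : (∑ n ∈ Finset.range (2^N), ((f (2^N + n) : ℕ) : ℝ))
          = ((∑ n ∈ Finset.range (2^N), f (2^N+n) : ℕ) : ℝ) := by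
        push_cast
        rfl
      rw [hcastsum]
      calc ((∑ n ∈ Finset.range (2^N), f (2^N+n) : ℕ) : ℝ)⁻¹
            * ∑ n ∈ Finset.range (2^N), (f (2^N + n) : ℝ) * g ((n:ℝ)/2^N)
          ≤ ((∑ n ∈ Finset.range (2^N), f (2^N+n) : ℕ) : ℝ)⁻¹
            * (3 * K k * ((∑ n ∈ Finset.range (2^N), f (2^N+n) : ℕ) : ℝ)) :=
            mul_le_mul_of_nonneg_left hnum2 (inv_nonneg.mpr (le_of_lt hDR))
        _ = 3 * K k := by
            rw [mul_comm, mul_assoc, mul_inv_cancel₀ (ne_of_gt hDR), mul_one]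
    have hintle : ∫ y, g y ∂μ ≤ 3 * K k := by
      apply le_of_tendsto (hlim g)
      filter_upwards [eventually_ge_atTop k] with N hNk
      obtain ⟨M, rfl⟩ := Nat.exists_eq_add_of_le hNk
      exact hNbound M
    have hatom : (μ {x}).toReal ≤ ∫ y, g y ∂μ := by
      have hmeas : MeasurableSet ({x} : Set ℝ) := measurableSet_singleton x
      have hint1 : Integrable (Set.indicator {x} (fun _ => (1:ℝ))) μ :=
        (integrable_const (1:ℝ)).indicator hmeas
      have hint2 : Integrable g μ := g.integrable μ
      have hle : ∀ y, Set.indicator {x} (fun _ => (1:ℝ)) y ≤ g y := by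
        intro y
        by_cases hxy : y = x
        · subst hxy
          rw [Set.indicator_of_mem (Set.mem_singleton y)]
          rw [hg, bump_self]
        · rw [Set.indicator_of_notMem (by simpa using hxy)]
          exact bump_nonneg _ _ _
      calc (μ {x}).toReal = ∫ y, Set.indicator {x} (fun _ => (1:ℝ)) y ∂μ := by
            rw [integral_indicator_const (1:ℝ) hmeas]
            simp
            rfl
      _ ≤ ∫ y, g y ∂μ := integral_mono hint1 hint2 hle
    linarith
  have h0 : (μ {x}).toReal = 0 := by
    by_contra h
    have hpos : 0 < (μ {x}).toReal := lt_of_le_of_ne ENNReal.toReal_nonneg (Ne.symm h)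
    exact absurd (key _ hpos) (lt_irrefl _)
  rcases (ENNReal.toReal_eq_zero_iff _).mp h0 with h | h
  · exact h
  · exact absurd h (measure_ne_top μ _)
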